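/- arXiv:1806.03915 — 2 statements merged into one kernel-verified Lean document; each statement's English description precedes it below -/
import Mathlib

section
/- Let α_{k+1} be the largest root of the quadratic 2Lα² − α − C_k = 0 with L > 0, C_k ≥ 0, and set C_{k+1} = C_k + α_{k+1}, starting from C₀ = 0. Then C_k ≥ (k+1)²/(8L) for all k ≥ 1. -/
/-- For the recursion `C₀ = α₀ = 0`, `α_{k+1} = (1 + √(1 + 8 L C_k))/(4L)` (the largest
root of `2Lα² − α − C_k = 0`), `C_{k+1} = C_k + α_{k+1}`, one has
`C_k ≥ (k+1)²/(8L)` for all `k ≥ 1`. -/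
theorem coeff_growth_lower_bound (L : ℝ) (hL : 0 < L) (α C : ℕ → ℝ)
    (hC0 : C 0 = 0) (hα0 : α 0 = 0)
    (hα : ∀ k, α (k + 1) = (1 + Real.sqrt (1 + 8 * L * C k)) / (4 * L))
    (hCrec : ∀ k, C (k + 1) = C k + α (k + 1)) :
    ∀ k : ℕ, 1 ≤ k → ((k : ℝ) + 1) ^ 2 / (8 * L) ≤ C k := by
  intro k hk
  induction k with
  | zero => omega
  | succ n ih =>
    rcases Nat.eq_or_lt_of_le hk with h1 | h1
    · -- n = 0
      have hn : n = 0 := by omega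
      subst hn
      rw [hCrec, hα, hC0]
      have hs : Real.sqrt (1 + 8 * L * 0) = 1 := by
        rw [mul_zero, add_zero, Real.sqrt_one]
      rw [hs]
      have hL' : L ≠ 0 := ne_of_gt hL
      push_cast
      rw [zero_add, div_le_div_iff₀ (by positivity) (by positivity)]
      nlinarith
    · -- n ≥ 1
      have hn : 1 ≤ n := by omega
      have ihn := ih hn
      have hsq : (n : ℝ) + 1 ≤ Real.sqrt (1 + 8 * L * C n) := by
        have h1 : ((n : ℝ) + 1) ^ 2 ≤ 8 * L * C n := by
          have := (div_le_iff₀ (by positivity : (0:ℝ) < 8 * L)).mp ihn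
          linarith
        have hcn : (0:ℝ) ≤ C n := by
          have : (0:ℝ) ≤ ((n : ℝ) + 1) ^ 2 / (8 * L) := by positivity
          linarith
        calc (n : ℝ) + 1 = Real.sqrt (((n:ℝ) + 1) ^ 2) := by
              rw [Real.sqrt_sq (by positivity)]
          _ ≤ Real.sqrt (1 + 8 * L * C n) := by
              apply Real.sqrt_le_sqrt
              nlinarith
      rw [hCrec, hα]
      have key : ((n : ℝ) + 2) / (4 * L) ≤ (1 + Real.sqrt (1 + 8 * L * C n)) / (4 * L) := by
        rw [div_le_div_iff₀ (by positivity) (by positivity)]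
        nlinarith [Real.sqrt_nonneg (1 + 8 * L * C n)]
      push_cast
      have : ((n : ℝ) + 1 + 1) ^ 2 / (8 * L) ≤ ((n:ℝ)+1)^2 / (8*L) + ((n : ℝ) + 2) / (4 * L) := by
        rw [div_add_div _ _ (by positivity) (by positivity), div_le_div_iff₀ (by positivity) (by positivity)]
        nlinarith
      linarith [ihn, key]
end

section
/- Under the recursion C_{k+1} = C_k + α_{k+1} with α_{k+1} the largest root of 2Lα² = C_k + α and C₀ = 0, it holds that C_{k+1} ≤ 4 C_k for all k ≥ 1, i.e. consecutive coefficients grow by at most a factor of 4. -/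
/-- Under the recursion `C₀ = α₀ = 0`, `α_{k+1} = (1 + √(1 + 8 L C_k))/(4L)`,
`C_{k+1} = C_k + α_{k+1}`, consecutive coefficients grow by at most a factor of `4`:
`C_{k+1} ≤ 4 C_k` for all `k ≥ 1`. -/
theorem coeff_growth_factor_le_four (L : ℝ) (hL : 0 < L) (α C : ℕ → ℝ)
    (hC0 : C 0 = 0) (hα0 : α 0 = 0)
    (hα : ∀ k, α (k + 1) = (1 + Real.sqrt (1 + 8 * L * C k)) / (4 * L))
    (hCrec : ∀ k, C (k + 1) = C k + α (k + 1)) :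
    ∀ k : ℕ, 1 ≤ k → C (k + 1) ≤ 4 * C k := by
  have hlb : ∀ k : ℕ, 1 ≤ k → 1 / (2 * L) ≤ C k := by
    intro k hk
    induction k with
    | zero => omega
    | succ n ih =>
      rcases Nat.eq_or_lt_of_le hk with h1 | h1
      · have : C 1 = 1 / (2 * L) := by
          rw [hCrec 0, hC0, hα 0, hC0]
          rw [show (1 : ℝ) + 8 * L * 0 = 1 by ring, Real.sqrt_one]
          field_simp; ring
        rw [← h1, this]
      · have hn : 1 ≤ n := by omega
        have := ih hn
        rw [hCrec n, hα n]
        have hs : 0 ≤ Real.sqrt (1 + 8 * L * C n) := Real.sqrt_nonneg _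
        have h4 : 0 < 4 * L := by linarith
        have : 0 ≤ (1 + Real.sqrt (1 + 8 * L * C n)) / (4 * L) := by positivity
        linarith
  intro k hk
  have hck := hlb k hk
  rw [hCrec k, hα k]
  set s := Real.sqrt (1 + 8 * L * C k) with hs
  have hs0 : 0 ≤ s := Real.sqrt_nonneg _
  have hsq : s ^ 2 = 1 + 8 * L * C k := by
    have hCk0 : 0 < C k := lt_of_lt_of_le (by positivity) hck
    rw [hs, Real.sq_sqrt]
    nlinarith
  have hx : 1 / 2 ≤ L * C k := by
    have h2 : 0 < 2 * L := by linarith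
    rw [div_le_iff₀ h2] at hck
    nlinarith
  have hslt : s ≤ 12 * (L * C k) - 1 := by
    nlinarith [sq_nonneg (s - (12 * (L * C k) - 1))]
  have h4 : 0 < 4 * L := by linarith
  have : (1 + s) / (4 * L) ≤ 3 * C k := by
    rw [div_le_iff₀ h4]
    nlinarith
  linarith
end
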